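/- Let E be the real evolution algebra with e1² = e1 + a2 e2 + a3 e3, e2² = 0, e3² = c2·e1² with c2 > 0 and 1 + c2 a3² ≠ 0. Then E is isomorphic to the evolution algebra with structure matrix [[1,0,0],[0,0,0],[1,0,0]], i.e., f1² = f1, f2² = 0, f3² = f1, via the natural basis f1 = (1/(1+c2a3²))·(e1 + a2 e2 + a3 e3)-type change described by B' = {e1 + a2 e2 + a3 e3, e2, -a3 c2 e1 + e2 + e3} followed by rescaling. -/

import Mathlib

/-- Multiplication of the evolution algebra with structure matrix `M`. -/
def evMul {n : ℕ} (M : Matrix (Fin n) (Fin n) ℝ) (x y : Fin n → ℝ) : Fin n → ℝ :=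
  fun k => ∑ i, M i k * x i * y i

set_option maxHeartbeats 1600000 in
/-- The real evolution algebra with `e1² = e1 + a₂e2 + a₃e3`, `e2² = 0`, `e3² = c₂·e1²`,
where `c₂ > 0` and `1 + c₂a₃² ≠ 0`, is isomorphic to the evolution algebra with structure
matrix `[[1,0,0],[0,0,0],[1,0,0]]`. -/
theorem stmt12 (a₂ a₃ c₂ : ℝ) (hc : c₂ > 0) (h : 1 + c₂ * a₃ ^ 2 ≠ 0) :
    ∃ T : (Fin 3 → ℝ) ≃ₗ[ℝ] (Fin 3 → ℝ),
      ∀ x y, T (evMul (![![1, 0, 0], ![0, 0, 0], ![1, 0, 0]]) x y)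
        = evMul (![![1, a₂, a₃], ![0, 0, 0], ![c₂, c₂ * a₂, c₂ * a₃]]) (T x) (T y) := by
  obtain ⟨r, hrpos, rfl⟩ : ∃ r, 0 < r ∧ r ^ 2 = c₂ :=
    ⟨Real.sqrt c₂, Real.sqrt_pos.2 hc, Real.sq_sqrt hc.le⟩
  have hr : r ≠ 0 := hrpos.ne'
  set s : ℝ := 1 + r ^ 2 * a₃ ^ 2 with hs_def
  have hs : s ≠ 0 := by rw [hs_def]; nlinarith [sq_nonneg (r * a₃)]
  refine ⟨{
    toFun := fun x => ![x 0 / s - a₃ * r * x 2 / s,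
                        a₂ * x 0 / s + x 1 + x 2 / (s * r),
                        a₃ * x 0 / s + x 2 / (s * r)],
    invFun := fun x => ![x 0 + a₃ * r ^ 2 * x 2,
                        (a₃ - a₂) * x 0 / s + x 1 - (1 + a₂ * a₃ * r ^ 2) * x 2 / s,
                        -(a₃ * r) * x 0 + r * x 2],
    map_add' := ?_, map_smul' := ?_, left_inv := ?_, right_inv := ?_}, ?_⟩
  · intro x y; funext k
    fin_cases k <;> simp [Pi.add_apply] <;> ring
  · intro c x; funext k
    fin_cases k <;> simp [Pi.smul_apply, smul_eq_mul] <;> ring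
  · intro x; funext k
    fin_cases k <;> simp <;> field_simp <;> ring
  · intro x; funext k
    fin_cases k <;> simp <;> field_simp <;> ring
  · intro x y; funext k
    simp only [LinearEquiv.coe_mk, LinearMap.coe_mk, AddHom.coe_mk, evMul, Fin.sum_univ_three]
    fin_cases k <;>
      simp only [Fin.reduceFinMk, Fin.zero_eta, Fin.mk_one, Matrix.cons_val_zero, Matrix.cons_val_one, Matrix.head_cons,
        Matrix.cons_val_two, Matrix.tail_cons, Fin.isValue] <;>
      field_simp <;> ring
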